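/- Let c₁, c₂ ∈ ℝ and let ρ : ℂ² \ {0} → ℝ be differentiable over ℝ and satisfy c₁·z₁·∂ρ/∂z₁(z) + c₂·z₂·∂ρ/∂z₂(z) = ρ(z) for every z ∈ ℂ² \ {0} (i.e. Z(ρ) = ρ for the vector field Z = c₁z₁·∂/∂z₁ + c₂z₂·∂/∂z₂). Then for every λ ∈ ℂ and every z ∈ ℂ² \ {0}, ρ(e^{c₁λ}·z₁, e^{c₂λ}·z₂) = |e^{λ}|²·ρ(z). -/

import Mathlib

open Complex Matrix
open scoped ComplexOrder

/-- The Wirtinger derivative `∂f/∂z_μ` of an `ℝ`-differentiable function `f : ℂⁿ → ℂ`. -/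
noncomputable def wD {n : ℕ} (f : (Fin n → ℂ) → ℂ) (z : Fin n → ℂ) (μ : Fin n) : ℂ :=
  (1 / 2 : ℂ) *
    (fderiv ℝ f z (Pi.single μ 1) - Complex.I * fderiv ℝ f z (Pi.single μ Complex.I))

/-- The conjugate Wirtinger derivative `∂f/∂z̄_μ`. -/
noncomputable def wDbar {n : ℕ} (f : (Fin n → ℂ) → ℂ) (z : Fin n → ℂ) (μ : Fin n) : ℂ :=
  (1 / 2 : ℂ) *
    (fderiv ℝ f z (Pi.single μ 1) + Complex.I * fderiv ℝ f z (Pi.single μ Complex.I))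

/-- The Levi matrix `ρ_{μν̄} = ∂²ρ/∂z_μ∂z̄_ν` of a real-valued function `ρ : ℂⁿ → ℝ`. -/
noncomputable def levi {n : ℕ} (ρ : (Fin n → ℂ) → ℝ) (z : Fin n → ℂ) :
    Matrix (Fin n) (Fin n) ℂ :=
  Matrix.of fun μ ν => wD (fun w => wDbar (fun w' => (ρ w' : ℂ)) w ν) z μ

/-- If `Z(ρ) = ρ` for the linear vector field `Z = c₁z₁∂/∂z₁ + c₂z₂∂/∂z₂` on `ℂ² \ {0}`,
then `ρ(e^{c₁λ}z₁, e^{c₂λ}z₂) = |e^λ|²·ρ(z)`. -/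
lemma fderiv_eq_re {ρ : (Fin 2 → ℂ) → ℝ} {w : Fin 2 → ℂ}
    (h : DifferentiableAt ℝ ρ w) (v : Fin 2 → ℂ) :
    fderiv ℝ ρ w v =
      (2 * (v 0 * wD (fun w' => (ρ w' : ℂ)) w 0 + v 1 * wD (fun w' => (ρ w' : ℂ)) w 1)).re := by
  have hcomp : fderiv ℝ (fun w' => ((ρ w' : ℝ) : ℂ)) w
      = Complex.ofRealCLM.comp (fderiv ℝ ρ w) :=
    (Complex.ofRealCLM.hasFDerivAt.comp w h.hasFDerivAt).fderiv
  have hv : v = (v 0).re • (Pi.single (0 : Fin 2) (1:ℂ) : Fin 2 → ℂ)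
      + (v 0).im • (Pi.single (0 : Fin 2) Complex.I : Fin 2 → ℂ)
      + (v 1).re • (Pi.single (1 : Fin 2) (1:ℂ) : Fin 2 → ℂ)
      + (v 1).im • (Pi.single (1 : Fin 2) Complex.I : Fin 2 → ℂ) := by
    funext μ
    fin_cases μ <;>
      simp [Pi.single_apply, Complex.real_smul, Complex.ext_iff]
  set a := fderiv ℝ ρ w (Pi.single (0:Fin 2) (1:ℂ)) with ha
  set b := fderiv ℝ ρ w (Pi.single (0:Fin 2) Complex.I) with hb
  set c := fderiv ℝ ρ w (Pi.single (1:Fin 2) (1:ℂ)) with hc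
  set d := fderiv ℝ ρ w (Pi.single (1:Fin 2) Complex.I) with hd
  have hL : fderiv ℝ ρ w v = (v 0).re * a + (v 0).im * b + (v 1).re * c + (v 1).im * d := by
    conv_lhs => rw [hv]
    simp [map_add, _root_.map_smul, smul_eq_mul, ha, hb, hc, hd]
  rw [hL]
  simp only [wD, hcomp, ContinuousLinearMap.comp_apply, Complex.ofRealCLM_apply, ← ha, ← hb, ← hc, ← hd]
  simp [Complex.ext_iff]
  ring


theorem rho_homogeneity_of_linear_gradient (c₁ c₂ : ℝ) (ρ : (Fin 2 → ℂ) → ℝ)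
    (hdiff : ∀ z : Fin 2 → ℂ, z ≠ 0 → DifferentiableAt ℝ ρ z)
    (hPDE : ∀ z : Fin 2 → ℂ, z ≠ 0 →
      (c₁ : ℂ) * z 0 * wD (fun w => (ρ w : ℂ)) z 0 +
        (c₂ : ℂ) * z 1 * wD (fun w => (ρ w : ℂ)) z 1 = (ρ z : ℂ)) :
    ∀ (lam : ℂ) (z : Fin 2 → ℂ), z ≠ 0 →
      ρ ![Complex.exp ((c₁ : ℂ) * lam) * z 0, Complex.exp ((c₂ : ℂ) * lam) * z 1] =
        ‖Complex.exp lam‖ ^ 2 * ρ z := by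

  intro lam z hz
  set γ : ℝ → Fin 2 → ℂ := fun t =>
    ![Complex.exp ((c₁ : ℂ) * t * lam) * z 0, Complex.exp ((c₂ : ℂ) * t * lam) * z 1] with hγ
  have hγne : ∀ t, γ t ≠ 0 := by
    intro t h0
    apply hz
    have h00 := congrFun h0 0
    have h01 := congrFun h0 1
    simp only [hγ, Matrix.cons_val_zero, Matrix.cons_val_one, Matrix.head_cons,
      Pi.zero_apply, mul_eq_zero, Complex.exp_ne_zero, false_or] at h00 h01
    funext μ
    fin_cases μ <;> assumption
  have key : ∀ (t : ℝ) (c : ℝ) (w : ℂ),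
      HasDerivAt (fun t : ℝ => Complex.exp ((c:ℂ) * t * lam) * w)
        (lam * ((c:ℂ) * (Complex.exp ((c:ℂ) * t * lam) * w))) t := by
    intro t c w
    have h1 : HasDerivAt (fun s : ℂ => Complex.exp ((c:ℂ) * s * lam) * w)
        (Complex.exp ((c:ℂ) * (t:ℂ) * lam) * ((c:ℂ) * 1 * lam) * w) ((t:ℝ):ℂ) :=
      ((((hasDerivAt_id ((t:ℝ):ℂ)).const_mul (c:ℂ)).mul_const lam).cexp).mul_const w
    have h2 := h1.comp_ofReal
    convert h2 using 1
    ring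
  have hγd : ∀ t : ℝ, HasDerivAt γ
      (fun μ => lam * (![(c₁:ℂ), (c₂:ℂ)] μ * γ t μ)) t := by
    intro t
    rw [hasDerivAt_pi]
    intro μ
    fin_cases μ <;>
      simpa [hγ] using key t _ _
  have hh : ∀ t : ℝ, HasDerivAt (fun t => ρ (γ t)) (2 * lam.re * ρ (γ t)) t := by
    intro t
    have hd := (hdiff (γ t) (hγne t)).hasFDerivAt
    have hc := hd.comp_hasDerivAt t (hγd t)
    refine hc.congr_deriv ?_
    rw [fderiv_eq_re (hdiff (γ t) (hγne t))]
    have hP := hPDE (γ t) (hγne t)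
    have h2 : (2 : ℂ) * ((fun μ => lam * (![(c₁:ℂ), (c₂:ℂ)] μ * γ t μ)) 0 *
          wD (fun w => (ρ w : ℂ)) (γ t) 0 +
        (fun μ => lam * (![(c₁:ℂ), (c₂:ℂ)] μ * γ t μ)) 1 *
          wD (fun w => (ρ w : ℂ)) (γ t) 1) = 2 * lam * (ρ (γ t) : ℂ) := by
      rw [← hP]
      simp only [Matrix.cons_val_zero, Matrix.cons_val_one, Matrix.head_cons]
      ring
    rw [h2]
    simp [Complex.mul_re]
  set k : ℝ := 2 * lam.re with hk
  have hg : ∀ t : ℝ, HasDerivAt (fun t => Real.exp (-k*t) * ρ (γ t)) 0 t := by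
    intro t
    have h1 : HasDerivAt (fun t : ℝ => Real.exp (-k*t)) (-k * Real.exp (-k*t)) t := by
      simpa [mul_comm] using (((hasDerivAt_id t).const_mul (-k)).exp)
    have := h1.mul (hh t)
    refine this.congr_deriv ?_
    ring
  have hconst := is_const_of_deriv_eq_zero
    (f := fun t => Real.exp (-k*t) * ρ (γ t))
    (fun t => (hg t).differentiableAt) (fun t => (hg t).deriv) 1 0
  simp only [mul_zero, mul_one, neg_zero, Real.exp_zero, one_mul] at hconst
  have h01 : ρ (γ 1) = Real.exp k * ρ (γ 0) := by
    have hne : Real.exp (-k) ≠ 0 := Real.exp_ne_zero _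
    field_simp [Real.exp_neg] at hconst ⊢
    rw [← hconst, mul_right_comm, ← Real.exp_add]
    simp
  have hγ0 : γ 0 = z := by
    funext μ
    fin_cases μ <;> simp [hγ]
  have hγ1 : γ 1 = ![Complex.exp ((c₁ : ℂ) * lam) * z 0, Complex.exp ((c₂ : ℂ) * lam) * z 1] := by
    funext μ
    fin_cases μ <;> simp [hγ]
  rw [← hγ1, h01, hγ0, Complex.norm_exp, sq, ← Real.exp_add, hk]
  ring_nf
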